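/- arXiv:2203.14566 — 2 statements merged into one kernel-verified Lean document; each statement's English description precedes it below -/
import Mathlib

section
/- For every rational number p/q with p/q ≤ 1/3 (p, q positive integers, p < q), there is no simple planar connected graph G with dep(G) = p/q. -/
open SimpleGraph

namespace STED

/-- `T` is (the edge set of) a spanning tree of `G`. -/
def IsSpanningTree {V : Type*} (G : SimpleGraph V) (T : Set (Sym2 V)) : Prop :=
  T ⊆ G.edgeSet ∧ (SimpleGraph.fromEdgeSet T).IsTree

/-- the number of spanning trees of `G` -/
noncomputable def tau {V : Type*} (G : SimpleGraph V) : ℕ :=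
  {T : Set (Sym2 V) | IsSpanningTree G T}.ncard

/-- the number of spanning trees of `G` containing the edge `e` -/
noncomputable def tauEdge {V : Type*} (G : SimpleGraph V) (e : Sym2 V) : ℕ :=
  {T : Set (Sym2 V) | IsSpanningTree G T ∧ e ∈ T}.ncard

/-- the spanning tree edge density of `e` in `G` -/
noncomputable def density {V : Type*} (G : SimpleGraph V) (e : Sym2 V) : ℚ :=
  (tauEdge G e : ℚ) / (tau G : ℚ)

/-- `x` is the spanning tree edge dependence of `G`, i.e. the maximum of the
densities of the edges of `G`. -/
def IsDep {V : Type*} (G : SimpleGraph V) (x : ℚ) : Prop :=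
  (∃ e ∈ G.edgeSet, density G e = x) ∧ ∀ e ∈ G.edgeSet, density G e ≤ x


/-- `H` is a minor of `G`: there are nonempty, pairwise disjoint branch sets
`B w ⊆ V(G)`, each inducing a connected subgraph of `G`, such that every edge of
`H` is witnessed by an edge of `G` between the corresponding branch sets. -/
def IsMinor {V W : Type*} (G : SimpleGraph V) (H : SimpleGraph W) : Prop :=
  ∃ B : W → Set V, (∀ w, (B w).Nonempty) ∧
    (∀ w, (G.induce (B w)).Connected) ∧
    (∀ w w', w ≠ w' → Disjoint (B w) (B w')) ∧
    ∀ ⦃w w'⦄, H.Adj w w' → ∃ x ∈ B w, ∃ y ∈ B w', G.Adj x y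

/-- A graph is planar iff it has neither `K₅` nor `K₃,₃` as a minor
(Wagner's theorem). -/
def IsPlanar {V : Type*} (G : SimpleGraph V) : Prop :=
  ¬ IsMinor G (⊤ : SimpleGraph (Fin 5)) ∧
  ¬ IsMinor G (completeBipartiteGraph (Fin 3) (Fin 3))

variable {V : Type} {G : SimpleGraph V}

lemma connected_induce_singleton (G : SimpleGraph V) (x : V) :
    (G.induce ({x} : Set V)).Connected := by
  constructor
  · rintro ⟨a, rfl⟩ ⟨b, rfl⟩
    exact Reachable.refl _

lemma connected_induce_pair (G : SimpleGraph V) {x y : V} (h : G.Adj x y) :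
    (G.induce ({x, y} : Set V)).Connected := by
  have hx : (x : V) ∈ ({x, y} : Set V) := by simp
  have hy : (y : V) ∈ ({x, y} : Set V) := by simp
  have key : (G.induce ({x, y} : Set V)).Reachable ⟨x, hx⟩ ⟨y, hy⟩ :=
    SimpleGraph.Adj.reachable (by exact h)
  constructor
  · have toX : ∀ a : ({x, y} : Set V), (G.induce ({x, y} : Set V)).Reachable a ⟨x, hx⟩ := by
      rintro ⟨a, (rfl | rfl)⟩
      · exact Reachable.refl _
      · exact key.symm
    intro a b
    exact (toX a).trans (toX b).symm

lemma isMinor_mono {W : Type*} {G G' : SimpleGraph V} {H : SimpleGraph W}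
    (hle : G ≤ G') (h : IsMinor G H) : IsMinor G' H := by
  obtain ⟨B, h1, h2, h3, h4⟩ := h
  refine ⟨B, h1, fun w => SimpleGraph.Connected.mono (fun a b hab => hle hab) (h2 w), h3,
    fun w w' hww' => ?_⟩
  obtain ⟨x, hx, y, hy, hxy⟩ := h4 hww'
  exact ⟨x, hx, y, hy, hle hxy⟩

lemma minor_K5_of_clique (G : SimpleGraph V) (x : Fin 5 → V)
    (hx : ∀ i j, i ≠ j → G.Adj (x i) (x j)) : IsMinor G (⊤ : SimpleGraph (Fin 5)) := by
  refine ⟨fun i => {x i}, fun i => ⟨x i, rfl⟩, fun i => connected_induce_singleton G (x i),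
    fun i j hij => by simpa using (hx i j hij).ne,
    fun i j hij => ⟨x i, rfl, x j, rfl, hx i j hij⟩⟩

lemma minor_K5_of_pair (G : SimpleGraph V) (x0 x1 : V) (y : Fin 4 → V)
    (h01 : G.Adj x0 x1)
    (hy : ∀ i j, i ≠ j → G.Adj (y i) (y j))
    (hxy : ∀ i, G.Adj x0 (y i) ∨ G.Adj x1 (y i))
    (h0y : ∀ i, x0 ≠ y i) (h1y : ∀ i, x1 ≠ y i) :
    IsMinor G (⊤ : SimpleGraph (Fin 5)) := by
  classical
  refine ⟨Fin.cons {x0, x1} (fun j => {y j}), ?_, ?_, ?_, ?_⟩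
  · intro i
    induction i using Fin.cases with
    | zero => exact ⟨x0, by simp⟩
    | succ j => exact ⟨y j, by simp⟩
  · intro i
    induction i using Fin.cases with
    | zero => rw [Fin.cons_zero]; exact connected_induce_pair G h01
    | succ j => rw [Fin.cons_succ]; exact connected_induce_singleton G (y j)
  · intro i j hij
    induction i using Fin.cases with
    | zero =>
      induction j using Fin.cases with
      | zero => exact absurd rfl hij
      | succ j' =>
        simp only [Fin.cons_zero, Fin.cons_succ]
        rw [Set.disjoint_left]
        rintro a (rfl | rfl) ha <;> simp only [Set.mem_singleton_iff] at ha
        · exact h0y j' ha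
        · exact h1y j' ha
    | succ i' =>
      induction j using Fin.cases with
      | zero =>
        simp only [Fin.cons_zero, Fin.cons_succ]
        rw [Set.disjoint_left]
        rintro a rfl ha
        rcases ha with (h | h)
        · exact h0y i' h.symm
        · exact h1y i' h.symm
      | succ j' =>
        have hij' : i' ≠ j' := fun h => hij (by rw [h])
        simpa using (hy i' j' hij').ne
  · intro i j hij
    induction i using Fin.cases with
    | zero =>
      induction j using Fin.cases with
      | zero => exact absurd rfl hij
      | succ j' =>
        simp only [Fin.cons_zero, Fin.cons_succ]
        rcases hxy j' with h | h
        · exact ⟨x0, by simp, y j', rfl, h⟩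
        · exact ⟨x1, by simp, y j', rfl, h⟩
    | succ i' =>
      induction j using Fin.cases with
      | zero =>
        simp only [Fin.cons_zero, Fin.cons_succ]
        rcases hxy i' with h | h
        · exact ⟨y i', rfl, x0, by simp, h.symm⟩
        · exact ⟨y i', rfl, x1, by simp, h.symm⟩
      | succ j' =>
        have hij' : i' ≠ j' := fun h => hij (by rw [h])
        exact ⟨y i', by simp, y j', by simp, hy i' j' hij'⟩

lemma leaf_zero (v a b c d : V)
    (va : G.Adj v a) (vb : G.Adj v b) (vc : G.Adj v c) (vd : G.Adj v d)
    (ab : G.Adj a b) (ac : G.Adj a c) (ad : G.Adj a d)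
    (bc : G.Adj b c) (bd : G.Adj b d) (cd : G.Adj c d) :
    IsMinor G (⊤ : SimpleGraph (Fin 5)) := by
  apply minor_K5_of_clique G ![v, a, b, c, d]
  intro i j hij
  fin_cases i <;> fin_cases j <;>
    first
    | exact absurd rfl hij
    | exact va | exact va.symm | exact vb | exact vb.symm
    | exact vc | exact vc.symm | exact vd | exact vd.symm
    | exact ab | exact ab.symm | exact ac | exact ac.symm | exact ad | exact ad.symm
    | exact bc | exact bc.symm | exact bd | exact bd.symm | exact cd | exact cd.symm

/-- Missing at most the pair (p,q) among `{p,q,r,s,t}`, all adjacent to `v`. -/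
lemma leaf_one (v p q r s t : V)
    (vp : G.Adj v p) (vq : G.Adj v q) (vr : G.Adj v r) (vs : G.Adj v s) (vt : G.Adj v t)
    (qr : G.Adj q r) (qs : G.Adj q s) (qt : G.Adj q t)
    (rs : G.Adj r s) (rt : G.Adj r t) (st : G.Adj s t)
    (hpq : p ≠ q) (hpr : p ≠ r) (hps : p ≠ s) (hpt : p ≠ t) :
    IsMinor G (⊤ : SimpleGraph (Fin 5)) := by
  apply minor_K5_of_pair G p v ![q, r, s, t] vp.symm
  · intro i j hij
    fin_cases i <;> fin_cases j <;>
      first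
      | exact absurd rfl hij
      | exact qr | exact qr.symm | exact qs | exact qs.symm | exact qt | exact qt.symm
      | exact rs | exact rs.symm | exact rt | exact rt.symm | exact st | exact st.symm
  · intro i
    fin_cases i
    · exact Or.inr vq
    · exact Or.inr vr
    · exact Or.inr vs
    · exact Or.inr vt
  · intro i
    fin_cases i
    · exact hpq
    · exact hpr
    · exact hps
    · exact hpt
  · intro i
    fin_cases i
    · exact vq.ne
    · exact vr.ne
    · exact vs.ne
    · exact vt.ne

/-- Missing at most the pairs (p,q) and (r,s). -/
lemma leaf_two (v p q r s t : V)
    (vp : G.Adj v p) (vq : G.Adj v q) (vr : G.Adj v r) (vs : G.Adj v s) (vt : G.Adj v t)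
    (pr : G.Adj p r) (rq : G.Adj r q) (ps : G.Adj p s) (pt : G.Adj p t)
    (qs : G.Adj q s) (qt : G.Adj q t) (st : G.Adj s t)
    (hpq : p ≠ q) (hrs : r ≠ s) (hrt : r ≠ t) :
    IsMinor G (⊤ : SimpleGraph (Fin 5)) := by
  apply minor_K5_of_pair G p r ![q, s, t, v] pr
  · intro i j hij
    fin_cases i <;> fin_cases j <;>
      first
      | exact absurd rfl hij
      | exact qs | exact qs.symm | exact qt | exact qt.symm | exact vq.symm | exact vq
      | exact st | exact st.symm | exact vs.symm | exact vs | exact vt.symm | exact vt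
  · intro i
    fin_cases i
    · exact Or.inr rq
    · exact Or.inl ps
    · exact Or.inl pt
    · exact Or.inl vp.symm
  · intro i
    fin_cases i
    · exact hpq
    · exact ps.ne
    · exact pt.ne
    · exact vp.ne'
  · intro i
    fin_cases i
    · exact rq.ne
    · exact hrs
    · exact hrt
    · exact vr.ne'

lemma deg5_core (v a b c d e : V)
    (va : G.Adj v a) (vb : G.Adj v b) (vc : G.Adj v c) (vd : G.Adj v d) (ve : G.Adj v e)
    (nab : a ≠ b) (nac : a ≠ c) (nad : a ≠ d) (nae : a ≠ e)
    (nbc : b ≠ c) (nbd : b ≠ d) (nbe : b ≠ e)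
    (ncd : c ≠ d) (nce : c ≠ e) (nde : d ≠ e)
    (Hu : ∀ x y z : V, x ∈ ({a,b,c,d,e} : Set V) → y ∈ ({a,b,c,d,e} : Set V) →
      z ∈ ({a,b,c,d,e} : Set V) → x ≠ y → x ≠ z → y ≠ z → ¬G.Adj x y → G.Adj x z) :
    IsMinor G (⊤ : SimpleGraph (Fin 5)) := by
  classical
  by_cases hab : G.Adj a b
  case neg =>
    have ac : G.Adj a c := Hu a b c (by simp) (by simp) (by simp) nab nac nbc hab
    have ad : G.Adj a d := Hu a b d (by simp) (by simp) (by simp) nab nad nbd hab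
    have ae : G.Adj a e := Hu a b e (by simp) (by simp) (by simp) nab nae nbe hab
    have hba : ¬G.Adj b a := fun h => hab h.symm
    have bc : G.Adj b c := Hu b a c (by simp) (by simp) (by simp) nab.symm nbc nac hba
    have bd : G.Adj b d := Hu b a d (by simp) (by simp) (by simp) nab.symm nbd nad hba
    have be : G.Adj b e := Hu b a e (by simp) (by simp) (by simp) nab.symm nbe nae hba
    by_cases hcd : G.Adj c d
    case neg =>
      have de : G.Adj d e := Hu d c e (by simp) (by simp) (by simp) ncd.symm nde nce
        (fun h => hcd h.symm)
      exact leaf_two v a b c d e va vb vc vd ve ac bc.symm ad ae bd be de nab ncd nce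
    case pos =>
      by_cases hce : G.Adj c e
      case neg =>
        have ed : G.Adj e d := Hu e c d (by simp) (by simp) (by simp) nce.symm nde.symm ncd
          (fun h => hce h.symm)
        exact leaf_two v a b c e d va vb vc ve vd ac bc.symm ae ad be bd ed nab nce ncd
      case pos =>
        by_cases hde : G.Adj d e
        case neg =>
          exact leaf_two v a b d e c va vb vd ve vc ad bd.symm ae ac be bc hce.symm nab nde
            (Ne.symm ncd)
        case pos =>
          exact leaf_one v a b c d e va vb vc vd ve bc bd be hcd hce hde nab nac nad nae
  case pos =>
    by_cases hac : G.Adj a c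
    case neg =>
      have ad : G.Adj a d := Hu a c d (by simp) (by simp) (by simp) nac nad ncd hac
      have ae : G.Adj a e := Hu a c e (by simp) (by simp) (by simp) nac nae nce hac
      have hca : ¬G.Adj c a := fun h => hac h.symm
      have cb : G.Adj c b := Hu c a b (by simp) (by simp) (by simp) nac.symm nbc.symm nab hca
      have cd : G.Adj c d := Hu c a d (by simp) (by simp) (by simp) nac.symm ncd nad hca
      have ce : G.Adj c e := Hu c a e (by simp) (by simp) (by simp) nac.symm nce nae hca
      by_cases hbd : G.Adj b d
      case neg =>
        have bc : G.Adj b c := Hu b d c (by simp) (by simp) (by simp) nbd nbc (Ne.symm ncd) hbd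
        have de : G.Adj d e := Hu d b e (by simp) (by simp) (by simp) nbd.symm nde nbe
          (fun h => hbd h.symm)
        exact leaf_two v a c b d e va vc vb vd ve hab bc ad ae cd ce de nac nbd nbe
      case pos =>
        by_cases hbe : G.Adj b e
        case neg =>
          have bc : G.Adj b c := Hu b e c (by simp) (by simp) (by simp) nbe nbc nce.symm hbe
          have ed : G.Adj e d := Hu e b d (by simp) (by simp) (by simp) nbe.symm nde.symm nbd
            (fun h => hbe h.symm)
          exact leaf_two v a c b e d va vc vb ve vd hab bc ae ad ce cd ed nac nbe nbd
        case pos =>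
          by_cases hde : G.Adj d e
          case neg =>
            have dc : G.Adj d c := Hu d e c (by simp) (by simp) (by simp) nde ncd.symm nce.symm hde
            exact leaf_two v a c d e b va vc vd ve vb ad dc ae hab ce cb hbe.symm nac nde nbd.symm
          case pos =>
            exact leaf_one v a c b d e va vc vb vd ve cb cd ce hbd hbe hde nac nab nad nae
    case pos =>
      by_cases had : G.Adj a d
      case neg =>
        have ae : G.Adj a e := Hu a d e (by simp) (by simp) (by simp) nad nae nde had
        have hda : ¬G.Adj d a := fun h => had h.symm
        have db : G.Adj d b := Hu d a b (by simp) (by simp) (by simp) nad.symm nbd.symm nab hda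
        have dc : G.Adj d c := Hu d a c (by simp) (by simp) (by simp) nad.symm ncd.symm nac hda
        have de : G.Adj d e := Hu d a e (by simp) (by simp) (by simp) nad.symm nde nae hda
        by_cases hbc : G.Adj b c
        case neg =>
          have ce : G.Adj c e := Hu c b e (by simp) (by simp) (by simp) nbc.symm nce nbe
            (fun h => hbc h.symm)
          exact leaf_two v a d b c e va vd vb vc ve hab db.symm hac ae dc de ce nad nbc nbe
        case pos =>
          by_cases hbe : G.Adj b e
          case neg =>
            have ec : G.Adj e c := Hu e b c (by simp) (by simp) (by simp) nbe.symm nce.symm nbc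
              (fun h => hbe h.symm)
            exact leaf_two v a d b e c va vd vb ve vc hab db.symm ae hac de dc ec nad nbe nbc
          case pos =>
            by_cases hce : G.Adj c e
            case neg =>
              exact leaf_two v a d c e b va vd vc ve vb hac dc.symm ae hab de db hbe.symm nad
                nce nbc.symm
            case pos =>
              exact leaf_one v a d b c e va vd vb vc ve db dc de hbc hbe hce nad nab nac nae
      case pos =>
        by_cases hae : G.Adj a e
        case neg =>
          have hea : ¬G.Adj e a := fun h => hae h.symm
          have eb : G.Adj e b := Hu e a b (by simp) (by simp) (by simp) nae.symm nbe.symm nab hea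
          have ec : G.Adj e c := Hu e a c (by simp) (by simp) (by simp) nae.symm nce.symm nac hea
          have ed : G.Adj e d := Hu e a d (by simp) (by simp) (by simp) nae.symm nde.symm nad hea
          by_cases hbc : G.Adj b c
          case neg =>
            have cd : G.Adj c d := Hu c b d (by simp) (by simp) (by simp) nbc.symm ncd nbd
              (fun h => hbc h.symm)
            exact leaf_two v a e b c d va ve vb vc vd hab eb.symm hac had ec ed cd nae nbc nbd
          case pos =>
            by_cases hbd : G.Adj b d
            case neg =>
              have dc : G.Adj d c := Hu d b c (by simp) (by simp) (by simp) nbd.symm ncd.symm nbc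
                (fun h => hbd h.symm)
              exact leaf_two v a e b d c va ve vb vd vc hab eb.symm had hac ed ec dc nae nbd nbc
            case pos =>
              by_cases hcd : G.Adj c d
              case neg =>
                exact leaf_two v a e c d b va ve vc vd vb hac ec.symm had hab ed eb hbd.symm nae
                  ncd nbc.symm
              case pos =>
                exact leaf_one v a e b c d va ve vb vc vd eb ec ed hbc hbd hcd nae nab nac nad
        case pos =>
          by_cases hbc : G.Adj b c
          case neg =>
            have bd : G.Adj b d := Hu b c d (by simp) (by simp) (by simp) nbc nbd ncd hbc
            have be : G.Adj b e := Hu b c e (by simp) (by simp) (by simp) nbc nbe nce hbc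
            have hcb : ¬G.Adj c b := fun h => hbc h.symm
            have cd : G.Adj c d := Hu c b d (by simp) (by simp) (by simp) nbc.symm ncd nbd hcb
            have ce : G.Adj c e := Hu c b e (by simp) (by simp) (by simp) nbc.symm nce nbe hcb
            by_cases hde : G.Adj d e
            case neg =>
              exact leaf_two v b c d e a vb vc vd ve va bd cd.symm be hab.symm ce hac.symm
                hae.symm nbc nde nad.symm
            case pos =>
              exact leaf_one v b c d e a vb vc vd ve va cd ce hac.symm hde had.symm hae.symm
                nbc nbd nbe nab.symm
          case pos =>
            by_cases hbd : G.Adj b d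
            case neg =>
              have be : G.Adj b e := Hu b d e (by simp) (by simp) (by simp) nbd nbe nde hbd
              have hdb : ¬G.Adj d b := fun h => hbd h.symm
              have dc : G.Adj d c := Hu d b c (by simp) (by simp) (by simp) nbd.symm ncd.symm nbc hdb
              have de : G.Adj d e := Hu d b e (by simp) (by simp) (by simp) nbd.symm nde nbe hdb
              by_cases hce : G.Adj c e
              case neg =>
                exact leaf_two v b d c e a vb vd vc ve va hbc dc.symm be hab.symm de had.symm
                  hae.symm nbd nce nac.symm
              case pos =>
                exact leaf_one v b d c e a vb vd vc ve va dc de had.symm hce hac.symm hae.symm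
                  nbd nbc nbe nab.symm
            case pos =>
              by_cases hbe : G.Adj b e
              case neg =>
                have heb : ¬G.Adj e b := fun h => hbe h.symm
                have ec : G.Adj e c := Hu e b c (by simp) (by simp) (by simp) nbe.symm nce.symm nbc heb
                have ed : G.Adj e d := Hu e b d (by simp) (by simp) (by simp) nbe.symm nde.symm nbd heb
                by_cases hcd : G.Adj c d
                case neg =>
                  exact leaf_two v b e c d a vb ve vc vd va hbc ec.symm hbd hab.symm ed hae.symm
                    had.symm nbe ncd nac.symm
                case pos =>
                  exact leaf_one v b e c d a vb ve vc vd va ec ed hae.symm hcd hac.symm had.symm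
                    nbe nbc nbd nab.symm
              case pos =>
                by_cases hcd : G.Adj c d
                case neg =>
                  have ce : G.Adj c e := Hu c d e (by simp) (by simp) (by simp) ncd nce nde hcd
                  have de : G.Adj d e := Hu d c e (by simp) (by simp) (by simp) ncd.symm nde nce
                    (fun h => hcd h.symm)
                  exact leaf_one v c d a b e vc vd va vb ve had.symm hbd.symm de hab hae hbe
                    ncd nac.symm nbc.symm ce.ne
                case pos =>
                  by_cases hce : G.Adj c e
                  case neg =>
                    have ed : G.Adj e d := Hu e c d (by simp) (by simp) (by simp) nce.symm
                      nde.symm ncd (fun h => hce h.symm)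
                    exact leaf_one v c e a b d vc ve va vb vd hae.symm hbe.symm ed hab had hbd
                      nce nac.symm nbc.symm ncd
                  case pos =>
                    by_cases hde : G.Adj d e
                    case neg =>
                      exact leaf_one v d e a b c vd ve va vb vc hae.symm hbe.symm hce.symm
                        hab hac hbc nde nad.symm nbd.symm ncd.symm
                    case pos =>
                      exact leaf_one v a b c d e va vb vc vd ve hbc hbd hbe hcd hce hde
                        nab nac nad nae

/-- contract the edge `uv`, leaving `v` isolated -/
def contractG (G : SimpleGraph V) (u v : V) : SimpleGraph V where
  Adj x y := x ≠ y ∧ x ≠ v ∧ y ≠ v ∧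
    (G.Adj x y ∨ (x = u ∧ G.Adj v y) ∨ (y = u ∧ G.Adj v x))
  symm := ⟨by
    rintro x y ⟨h1, h2, h3, (h | ⟨rfl, h⟩ | ⟨rfl, h⟩)⟩
    · exact ⟨h1.symm, h3, h2, Or.inl h.symm⟩
    · exact ⟨h1.symm, h3, h2, Or.inr (Or.inr ⟨rfl, h⟩)⟩
    · exact ⟨h1.symm, h3, h2, Or.inr (Or.inl ⟨rfl, h⟩)⟩⟩
  loopless := ⟨fun x h => h.1 rfl⟩

lemma contractG_not_adj_left {G : SimpleGraph V} {u v y : V} (h : (contractG G u v).Adj v y) :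
    False := h.2.1 rfl

lemma walk_head_cases {W : Type*} {H' : SimpleGraph W} :
    ∀ {p q : W}, H'.Walk p q → p = q ∨ ∃ z, H'.Adj p z := by
  intro p q w
  cases w with
  | nil => exact Or.inl rfl
  | cons h _ => exact Or.inr ⟨_, h⟩

lemma exists_adj_of_connected {H : SimpleGraph V} {s : Set V} (hc : (H.induce s).Connected)
    {x y : V} (hx : x ∈ s) (hy : y ∈ s) (hxy : x ≠ y) : ∃ z ∈ s, H.Adj x z := by
  obtain ⟨w⟩ := hc.preconnected ⟨x, hx⟩ ⟨y, hy⟩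
  rcases walk_head_cases w with h | ⟨z, hz⟩
  · exact absurd (congrArg Subtype.val h) hxy
  · exact ⟨(z : V), z.2, hz⟩

lemma contract_lift {G : SimpleGraph V} {u v : V} (huv : G.Adj u v)
    (h : IsMinor (contractG G u v) (⊤ : SimpleGraph (Fin 5))) :
    IsMinor G (⊤ : SimpleGraph (Fin 5)) := by
  classical
  obtain ⟨B, hne, hconn, hdisj, hadj⟩ := h
  -- v is in no branch set
  have hv_not : ∀ i, v ∉ B i := by
    intro i hvB
    have hij : ∃ j, i ≠ j := by
      by_cases h0 : i = 0
      · exact ⟨1, by simp [h0]⟩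
      · exact ⟨0, h0⟩
    obtain ⟨j, hij⟩ := hij
    obtain ⟨x, hx, y, hy, hxy⟩ := hadj (by simpa using hij : (⊤ : SimpleGraph (Fin 5)).Adj i j)
    have hxv : x ≠ v := by
      rintro rfl
      exact contractG_not_adj_left hxy
    obtain ⟨z, _, hz⟩ := exists_adj_of_connected (hconn i) hvB hx (Ne.symm hxv)
    exact contractG_not_adj_left hz
  set B' : Fin 5 → Set V := fun i => B i ∪ {x | x = v ∧ u ∈ B i} with hB'
  have hBsub : ∀ i, B i ⊆ B' i := fun i => Set.subset_union_left
  refine ⟨B', fun i => ((hne i).mono (hBsub i)), ?_, ?_, ?_⟩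
  · -- connectivity
    intro i
    by_cases hu : u ∈ B i
    · have hvmem : v ∈ B' i := Or.inr ⟨rfl, hu⟩
      have humem : u ∈ B' i := hBsub i hu
      have key : ∀ (x y : ↥(B i)) (_ : ((contractG G u v).induce (B i)).Walk x y),
          (G.induce (B' i)).Reachable ⟨x, hBsub i x.2⟩ ⟨y, hBsub i y.2⟩ := by
        intro x y w
        induction w with
        | nil => exact Reachable.refl _
        | @cons a b c hadj' p ih =>
          refine Reachable.trans ?_ ih
          obtain ⟨h1, h2, h3, (h | ⟨hh, h⟩ | ⟨hh, h⟩)⟩ := hadj'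
          · exact SimpleGraph.Adj.reachable (by exact h)
          · refine Reachable.trans (SimpleGraph.Adj.reachable (v := ⟨v, hvmem⟩) ?_)
              (SimpleGraph.Adj.reachable ?_)
            · have : G.Adj (a : V) v := by
                have hh' : (a : V) = u := hh
                rw [hh']; exact huv
              exact this
            · exact h
          · refine Reachable.trans (SimpleGraph.Adj.reachable (v := ⟨v, hvmem⟩) ?_)
              (SimpleGraph.Adj.reachable ?_)
            · exact h.symm
            · have : G.Adj v (b : V) := by
                have hh' : (b : V) = u := hh
                rw [hh']; exact huv.symm
              exact this
      obtain ⟨x0, hx0⟩ := hne i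
      haveI : Nonempty ↥(B' i) := ⟨⟨x0, hBsub i hx0⟩⟩
      have reach : ∀ z : ↥(B' i), (G.induce (B' i)).Reachable z ⟨u, humem⟩ := by
        rintro ⟨z, hz⟩
        rcases hz with hz | hz
        · obtain ⟨w⟩ := (hconn i).preconnected ⟨z, hz⟩ ⟨u, hu⟩
          exact key _ _ w
        · have hzv : z = v := hz.1
          subst hzv
          exact SimpleGraph.Adj.reachable (by exact huv.symm : G.Adj z u)
      constructor
      intro p q
      exact (reach p).trans (reach q).symm
    · have hBeq : B' i = B i := by
        ext x
        simp only [hB', Set.mem_union, Set.mem_setOf_eq]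
        exact ⟨fun h' => by rcases h' with h' | ⟨_, h'⟩; exact h'; exact absurd h' hu,
          fun h' => Or.inl h'⟩
      rw [hBeq]
      refine SimpleGraph.Connected.mono ?_ (hconn i)
      rintro ⟨x, hx⟩ ⟨y, hy⟩ ⟨h1, h2, h3, (h | ⟨hh, h⟩ | ⟨hh, h⟩)⟩
      · exact h
      · exact absurd (hh ▸ hx) hu
      · exact absurd (hh ▸ hy) hu
  · -- disjoint
    intro i j hij
    rw [Set.disjoint_left]
    rintro x (hx | ⟨rfl, hx⟩) (hy | ⟨hy1, hy2⟩)
    · exact Set.disjoint_left.mp (hdisj i j hij) hx hy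
    · exact hv_not i (hy1 ▸ hx)
    · exact hv_not j hy
    · exact Set.disjoint_left.mp (hdisj i j hij) hx hy2
  · -- adjacency
    intro i j hij
    obtain ⟨x, hx, y, hy, hxy⟩ := hadj hij
    obtain ⟨h1, h2, h3, (h | ⟨rfl, h⟩ | ⟨rfl, h⟩)⟩ := hxy
    · exact ⟨x, hBsub i hx, y, hBsub j hy, h⟩
    · exact ⟨v, Or.inr ⟨rfl, hx⟩, y, hBsub j hy, h⟩
    · exact ⟨x, hBsub i hx, v, Or.inr ⟨rfl, hy⟩, h.symm⟩

lemma contract_count [Fintype V] [DecidableEq V] (G : SimpleGraph V) (u v : V)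
    (huv : G.Adj u v) :
    G.edgeSet.ncard ≤
      (contractG G u v).edgeSet.ncard + 1 + (G.neighborSet u ∩ G.neighborSet v).ncard := by
  classical
  set E : Finset (Sym2 V) := G.edgeSet.toFinset with hE
  set E' : Finset (Sym2 V) := (contractG G u v).edgeSet.toFinset with hE'
  have hEmem : ∀ e, e ∈ E ↔ e ∈ G.edgeSet := by simp [hE]
  have hE'mem : ∀ e, e ∈ E' ↔ e ∈ (contractG G u v).edgeSet := by simp [hE']
  set A0 : Finset (Sym2 V) := E.filter (fun e => v ∉ e) with hA0
  set A1 : Finset (Sym2 V) := (E.filter (fun e => v ∈ e)).erase s(u, v) with hA1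
  set f : Sym2 V → Sym2 V := Sym2.map (fun x => if x = v then u else x) with hf
  -- structure of A1 elements
  have hA1struct : ∀ e ∈ A1, ∃ y, e = s(v, y) ∧ y ≠ v ∧ y ≠ u ∧ G.Adj v y ∧ f e = s(u, y) := by
    intro e he
    rw [hA1, Finset.mem_erase, Finset.mem_filter] at he
    obtain ⟨hne, heE, hv⟩ := he
    induction e with
    | _ x y =>
      rw [hEmem, mem_edgeSet] at heE
      rw [Sym2.mem_iff] at hv
      rcases hv with rfl | rfl
      · refine ⟨y, rfl, (G.ne_of_adj heE).symm, ?_, heE, ?_⟩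
        · rintro rfl
          exact hne (Sym2.eq_swap)
        · rw [hf]
          have h1 : (if v = v then u else v) = u := if_pos rfl
          have h2 : (if y = v then u else y) = y := if_neg (G.ne_of_adj heE).symm
          rw [Sym2.map_pair_eq, h1, h2]
      · refine ⟨x, Sym2.eq_swap, (G.ne_of_adj heE), ?_, heE.symm, ?_⟩
        · rintro rfl
          exact hne rfl
        · rw [hf]
          have h1 : (if v = v then u else v) = u := if_pos rfl
          have h2 : (if x = v then u else x) = x := if_neg (G.ne_of_adj heE)
          rw [Sym2.map_pair_eq, h2, h1]
          exact Sym2.eq_swap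
  have hA0sub : A0 ⊆ E' := by
    intro e he
    rw [hA0, Finset.mem_filter] at he
    obtain ⟨heE, hv⟩ := he
    induction e with
    | _ x y =>
      rw [hEmem, mem_edgeSet] at heE
      rw [Sym2.mem_iff] at hv
      push_neg at hv
      rw [hE'mem, mem_edgeSet]
      exact ⟨heE.ne, fun h => hv.1 h.symm, fun h => hv.2 h.symm, Or.inl heE⟩
  have him1sub : A1.image f ⊆ E' := by
    intro e' he'
    rw [Finset.mem_image] at he'
    obtain ⟨e, he, rfl⟩ := he'
    obtain ⟨y, rfl, hyv, hyu, hvy, hfe⟩ := hA1struct e he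
    rw [hfe, hE'mem, mem_edgeSet]
    exact ⟨fun h => hyu h.symm, G.ne_of_adj huv, hyv, Or.inr (Or.inl ⟨rfl, hvy⟩)⟩
  have hinj : Set.InjOn f A1 := by
    intro e1 he1 e2 he2 hfe
    obtain ⟨y1, rfl, hy1v, hy1u, hvy1, hf1⟩ := hA1struct e1 he1
    obtain ⟨y2, rfl, hy2v, hy2u, hvy2, hf2⟩ := hA1struct e2 he2
    rw [hf1, hf2, Sym2.eq_iff] at hfe
    rcases hfe with ⟨-, rfl⟩ | ⟨rfl, rfl⟩
    · rfl
    · exact absurd rfl hy1u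
  have hcard_im1 : (A1.image f).card = A1.card := Finset.card_image_of_injOn hinj
  have hinter : A0 ∩ A1.image f ⊆
      ((G.neighborSet u ∩ G.neighborSet v).toFinset).image (fun y => s(u, y)) := by
    intro e he
    rw [Finset.mem_inter] at he
    obtain ⟨he0, he1⟩ := he
    rw [Finset.mem_image] at he1
    obtain ⟨e1, he1, rfl⟩ := he1
    obtain ⟨y, rfl, hyv, hyu, hvy, hfe⟩ := hA1struct e1 he1
    rw [hfe] at he0 ⊢
    rw [hA0, Finset.mem_filter, hEmem, mem_edgeSet] at he0
    rw [Finset.mem_image]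
    refine ⟨y, ?_, rfl⟩
    rw [Set.mem_toFinset]
    exact ⟨he0.1, hvy⟩
  -- cardinal bookkeeping
  have hsplit : E.card = A0.card + A1.card + 1 := by
    have h1 : (E.filter (fun e => v ∈ e)).card = A1.card + 1 := by
      rw [hA1]
      rw [Finset.card_erase_of_mem]
      · have hpos : 0 < (E.filter (fun e => v ∈ e)).card := by
          rw [Finset.card_pos]
          refine ⟨s(u, v), ?_⟩
          rw [Finset.mem_filter, hEmem, mem_edgeSet]
          exact ⟨huv, by simp⟩
        omega
      · rw [Finset.mem_filter, hEmem, mem_edgeSet]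
        exact ⟨huv, by simp⟩
    have h2 : A0.card + (E.filter (fun e => v ∈ e)).card = E.card := by
      rw [hA0]
      rw [← Finset.card_filter_add_card_filter_not (p := fun e => v ∈ e) (s := E)]
      exact add_comm _ _
    omega
  have hunion : (A0 ∪ A1.image f).card + (A0 ∩ A1.image f).card = A0.card + A1.card := by
    rw [Finset.card_union_add_card_inter, hcard_im1]
  have hle1 : (A0 ∪ A1.image f).card ≤ E'.card :=
    Finset.card_le_card (Finset.union_subset hA0sub him1sub)
  have hle2 : (A0 ∩ A1.image f).card ≤ (G.neighborSet u ∩ G.neighborSet v).toFinset.card := by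
    refine le_trans (Finset.card_le_card hinter) (Finset.card_image_le)
  have hEcard : G.edgeSet.ncard = E.card := by rw [hE, Set.ncard_eq_toFinset_card']
  have hE'card : (contractG G u v).edgeSet.ncard = E'.card := by
    rw [hE', Set.ncard_eq_toFinset_card']
  have hNcard : (G.neighborSet u ∩ G.neighborSet v).ncard
      = (G.neighborSet u ∩ G.neighborSet v).toFinset.card := by
    rw [Set.ncard_eq_toFinset_card']
  omega

lemma card_eq_four' {α : Type*} [DecidableEq α] {s : Finset α} (h : s.card = 4) :
    ∃ a b c d : α, a ≠ b ∧ a ≠ c ∧ a ≠ d ∧ b ≠ c ∧ b ≠ d ∧ c ≠ d ∧ s = {a, b, c, d} := by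
  obtain ⟨a, t, hat, rfl, ht⟩ := Finset.card_eq_succ.mp h
  obtain ⟨b, c, d, hbc, hbd, hcd, rfl⟩ := Finset.card_eq_three.mp ht
  simp only [Finset.mem_insert, Finset.mem_singleton] at hat
  push_neg at hat
  exact ⟨a, b, c, d, hat.1, hat.2.1, hat.2.2, hbc, hbd, hcd, rfl⟩

lemma card_eq_five' {α : Type*} [DecidableEq α] {s : Finset α} (h : s.card = 5) :
    ∃ a b c d e : α, a ≠ b ∧ a ≠ c ∧ a ≠ d ∧ a ≠ e ∧ b ≠ c ∧ b ≠ d ∧ b ≠ e ∧ c ≠ d ∧ c ≠ e ∧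
      d ≠ e ∧ s = {a, b, c, d, e} := by
  obtain ⟨a, t, hat, rfl, ht⟩ := Finset.card_eq_succ.mp h
  obtain ⟨b, c, d, e, hbc, hbd, hbe, hcd, hce, hde, rfl⟩ := card_eq_four' ht
  simp only [Finset.mem_insert, Finset.mem_singleton] at hat
  push_neg at hat
  exact ⟨a, b, c, d, e, hat.1, hat.2.1, hat.2.2.1, hat.2.2.2, hbc, hbd, hbe, hcd, hce, hde, rfl⟩

lemma sum_deg_ncard [Fintype V] [DecidableEq V] (G : SimpleGraph V) [DecidableRel G.Adj] :
    ∑ x, G.degree x = 2 * G.edgeSet.ncard := by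
  rw [SimpleGraph.sum_degrees_eq_twice_card_edges]
  congr 1
  rw [Set.ncard_eq_toFinset_card']
  simp [edgeFinset]

theorem extremal {N : ℕ} (k : ℕ) : ∀ (G : SimpleGraph (Fin N)) (s : Finset (Fin N)),
    (∀ ⦃x y⦄, G.Adj x y → x ∈ s) → s.card ≤ k → 1 ≤ G.edgeSet.ncard →
    3 * s.card ≤ G.edgeSet.ncard + 3 → IsMinor G (⊤ : SimpleGraph (Fin 5)) := by
  induction k using Nat.strong_induction_on with
  | _ k ih =>
  intro G s hsupp hsk h1 h3
  classical
  -- s has at least 2 elements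
  have hk2 : 2 ≤ s.card := by
    obtain ⟨e, he⟩ := Set.nonempty_of_ncard_ne_zero (show G.edgeSet.ncard ≠ 0 by omega)
    induction e with
    | _ x y =>
      rw [mem_edgeSet] at he
      have : 1 < s.card := Finset.one_lt_card.mpr ⟨x, hsupp he, y, hsupp he.symm, he.ne⟩
      omega
  -- trim the graph to exactly 3 * s.card - 3 edges
  have hfin : G.edgeSet.ncard = G.edgeSet.toFinset.card := Set.ncard_eq_toFinset_card' _
  obtain ⟨t, hts, htc⟩ := Finset.exists_subset_card_eq
    (show 3 * s.card - 3 ≤ G.edgeSet.toFinset.card by omega)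
  set G1 : SimpleGraph (Fin N) := fromEdgeSet ↑t with hG1
  have htsub : (↑t : Set (Sym2 (Fin N))) ⊆ G.edgeSet := by
    intro e he
    exact Set.mem_toFinset.mp (hts he)
  have hG1le : G1 ≤ G := by
    rw [hG1, ← fromEdgeSet_edgeSet G]
    exact fromEdgeSet_mono htsub
  have hG1edge : G1.edgeSet = ↑t := by
    rw [hG1, edgeSet_fromEdgeSet]
    ext e
    simp only [Set.mem_diff, Set.mem_setOf_eq, Finset.mem_coe]
    exact ⟨fun h => h.1, fun h => ⟨h, G.not_isDiag_of_mem_edgeSet (htsub h)⟩⟩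
  have hm1 : G1.edgeSet.ncard = 3 * s.card - 3 := by
    rw [hG1edge, Set.ncard_coe_finset, htc]
  have hsupp1 : ∀ ⦃x y⦄, G1.Adj x y → x ∈ s := fun x y h => hsupp (hG1le h)
  refine isMinor_mono hG1le ?_
  -- degree bounds
  have hdegsum : ∑ x ∈ Finset.univ, G1.degree x = 2 * (3 * s.card - 3) := by
    rw [sum_deg_ncard G1, hm1]
  have hdeg0 : ∀ x, x ∉ s → G1.degree x = 0 := by
    intro x hx
    rw [← SimpleGraph.card_neighborFinset_eq_degree, Finset.card_eq_zero]
    rw [Finset.eq_empty_iff_forall_notMem]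
    intro y hy
    rw [mem_neighborFinset] at hy
    exact hx (hsupp1 hy)
  have hsum_s : ∑ x ∈ s, G1.degree x = 2 * (3 * s.card - 3) := by
    rw [← hdegsum]
    exact Finset.sum_subset (Finset.subset_univ s) (fun x _ hx => hdeg0 x hx)
  have hdegle : ∀ x ∈ s, G1.degree x ≤ s.card - 1 := by
    intro x hx
    rw [← SimpleGraph.card_neighborFinset_eq_degree]
    have hsub : G1.neighborFinset x ⊆ s.erase x := by
      intro y hy
      rw [mem_neighborFinset] at hy
      exact Finset.mem_erase.mpr ⟨hy.ne', hsupp1 hy.symm⟩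
    calc (G1.neighborFinset x).card ≤ (s.erase x).card := Finset.card_le_card hsub
    _ = s.card - 1 := by rw [Finset.card_erase_of_mem hx]
  -- s.card is at least 6
  have hk6 : 6 ≤ s.card := by
    by_contra hlt
    have hsum_le : ∑ x ∈ s, G1.degree x ≤ s.card * (s.card - 1) := by
      calc ∑ x ∈ s, G1.degree x ≤ ∑ _x ∈ s, (s.card - 1) := Finset.sum_le_sum hdegle
      _ = s.card * (s.card - 1) := by rw [Finset.sum_const, smul_eq_mul]
    rw [hsum_s] at hsum_le
    have hcases : s.card = 2 ∨ s.card = 3 ∨ s.card = 4 ∨ s.card = 5 := by omega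
    rcases hcases with h' | h' | h' | h' <;> rw [h'] at hsum_le <;> omega
  -- find a vertex of degree at most 5
  have hv5 : ∃ v ∈ s, G1.degree v ≤ 5 := by
    by_contra hcon
    push_neg at hcon
    have : s.card * 6 ≤ ∑ x ∈ s, G1.degree x := by
      calc s.card * 6 = ∑ _x ∈ s, 6 := by rw [Finset.sum_const, smul_eq_mul, mul_comm]
      _ ≤ ∑ x ∈ s, G1.degree x := Finset.sum_le_sum (fun x hx => hcon x hx)
    rw [hsum_s] at this
    omega
  obtain ⟨v, hvs, hv5⟩ := hv5
  set S := G1.neighborFinset v with hS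
  have hScard : S.card = G1.degree v := SimpleGraph.card_neighborFinset_eq_degree _ _
  by_cases hcon : ∃ u ∈ S, (G1.neighborFinset u ∩ G1.neighborFinset v).card ≤ 2
  · -- contraction case
    obtain ⟨u, huS, hcom⟩ := hcon
    have huv : G1.Adj u v := ((mem_neighborFinset _ _ _).mp huS).symm
    set G2 := contractG G1 u v with hG2
    have hcount : G1.edgeSet.ncard ≤ G2.edgeSet.ncard + 1 +
        (G1.neighborSet u ∩ G1.neighborSet v).ncard := contract_count G1 u v huv
    have hninter : (G1.neighborSet u ∩ G1.neighborSet v).ncard ≤ 2 := by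
      have heq : (G1.neighborSet u ∩ G1.neighborSet v).toFinset
          = G1.neighborFinset u ∩ G1.neighborFinset v := by
        rw [Set.toFinset_inter]
        rfl
      rw [Set.ncard_eq_toFinset_card', heq]
      exact hcom
    have hsupp2 : ∀ ⦃x y⦄, G2.Adj x y → x ∈ s.erase v := by
      rintro x y ⟨hxy, hxv, hyv, (h | ⟨rfl, h⟩ | ⟨rfl, h⟩)⟩
      · exact Finset.mem_erase.mpr ⟨hxv, hsupp1 h⟩
      · exact Finset.mem_erase.mpr ⟨hxv, hsupp1 huv⟩
      · exact Finset.mem_erase.mpr ⟨hxv, hsupp1 h.symm⟩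
    have hcard_erase : (s.erase v).card = s.card - 1 := Finset.card_erase_of_mem hvs
    have hm2 : 3 * s.card - 6 ≤ G2.edgeSet.ncard := by omega
    exact contract_lift huv (ih (k - 1) (by omega) G2 (s.erase v) hsupp2 (by omega)
      (by omega) (by omega))
  · push_neg at hcon
    by_cases hS0 : S = ∅
    · -- v is isolated in G1; drop it from s
      have hsupp' : ∀ ⦃x y⦄, G1.Adj x y → x ∈ s.erase v := by
        intro x y h
        refine Finset.mem_erase.mpr ⟨?_, hsupp1 h⟩
        rintro rfl
        have : y ∈ S := (mem_neighborFinset _ _ _).mpr h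
        simp [hS0] at this
      have hcard_erase : (s.erase v).card = s.card - 1 := Finset.card_erase_of_mem hvs
      exact ih (k - 1) (by omega) G1 (s.erase v) hsupp' (by omega) (by omega) (by omega)
    · -- every neighbor of v has ≥ 3 common neighbors with v
      obtain ⟨u0, hu0⟩ := Finset.nonempty_of_ne_empty hS0
      have hcommon_sub : ∀ u ∈ S, G1.neighborFinset u ∩ G1.neighborFinset v ⊆ S.erase u := by
        intro u huS z hz
        rw [Finset.mem_inter] at hz
        refine Finset.mem_erase.mpr ⟨?_, hz.2⟩
        rintro rfl
        exact G1.irrefl ((mem_neighborFinset _ _ _).mp hz.1)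
      have hS4 : 4 ≤ S.card := by
        have h3' := hcon u0 hu0
        have hle := Finset.card_le_card (hcommon_sub u0 hu0)
        rw [Finset.card_erase_of_mem hu0] at hle
        omega
      have hS5 : S.card ≤ 5 := by omega
      by_cases hS4' : S.card = 4
      · -- neighborhood is a clique on 4 vertices
        have hall : ∀ x ∈ S, ∀ z ∈ S, z ≠ x → G1.Adj x z := by
          intro x hxS z hzS hzx
          have h3' := hcon x hxS
          have heq : G1.neighborFinset x ∩ G1.neighborFinset v = S.erase x := by
            refine Finset.eq_of_subset_of_card_le (hcommon_sub x hxS) ?_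
            rw [Finset.card_erase_of_mem hxS, hS4']
            omega
          have hz : z ∈ G1.neighborFinset x ∩ G1.neighborFinset v := by
            rw [heq]
            exact Finset.mem_erase.mpr ⟨hzx, hzS⟩
          rw [Finset.mem_inter, mem_neighborFinset] at hz
          exact hz.1
        obtain ⟨a, b, c, d, nab, nac, nad, nbc, nbd, ncd, hSeq⟩ := card_eq_four' hS4'
        have haS : a ∈ S := by rw [hSeq]; simp
        have hbS : b ∈ S := by rw [hSeq]; simp
        have hcS : c ∈ S := by rw [hSeq]; simp
        have hdS : d ∈ S := by rw [hSeq]; simp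
        exact leaf_zero v a b c d
          ((mem_neighborFinset _ _ _).mp haS) ((mem_neighborFinset _ _ _).mp hbS)
          ((mem_neighborFinset _ _ _).mp hcS) ((mem_neighborFinset _ _ _).mp hdS)
          (hall a haS b hbS nab.symm) (hall a haS c hcS nac.symm)
          (hall a haS d hdS nad.symm) (hall b hbS c hcS nbc.symm)
          (hall b hbS d hdS nbd.symm) (hall c hcS d hdS ncd.symm)
      · have hS5' : S.card = 5 := by omega
        obtain ⟨a, b, c, d, e, nab, nac, nad, nae, nbc, nbd, nbe, ncd, nce, nde, hSeq⟩ :=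
          card_eq_five' hS5'
        have hmemS : ∀ x : Fin N, x ∈ S ↔ (x = a ∨ x = b ∨ x = c ∨ x = d ∨ x = e) := by
          intro x
          rw [hSeq]
          simp
        refine deg5_core v a b c d e
          ((mem_neighborFinset _ _ _).mp ((hmemS a).mpr (Or.inl rfl)))
          ((mem_neighborFinset _ _ _).mp ((hmemS b).mpr (Or.inr (Or.inl rfl))))
          ((mem_neighborFinset _ _ _).mp ((hmemS c).mpr (Or.inr (Or.inr (Or.inl rfl)))))
          ((mem_neighborFinset _ _ _).mp ((hmemS d).mpr (Or.inr (Or.inr (Or.inr (Or.inl rfl))))))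
          ((mem_neighborFinset _ _ _).mp ((hmemS e).mpr (Or.inr (Or.inr (Or.inr (Or.inr rfl))))))
          nab nac nad nae nbc nbd nbe ncd nce nde ?_
        intro x y z hx hy hz hxy hxz hyz hnadj
        have hxS : x ∈ S := (hmemS x).mpr (by simpa using hx)
        have hyS : y ∈ S := (hmemS y).mpr (by simpa using hy)
        have hzS : z ∈ S := (hmemS z).mpr (by simpa using hz)
        have hsub : G1.neighborFinset x ∩ G1.neighborFinset v ⊆ (S.erase x).erase y := by
          intro z' hz'
          refine Finset.mem_erase.mpr ⟨?_, hcommon_sub x hxS hz'⟩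
          rintro rfl
          rw [Finset.mem_inter, mem_neighborFinset] at hz'
          exact hnadj hz'.1
        have heq : G1.neighborFinset x ∩ G1.neighborFinset v = (S.erase x).erase y := by
          refine Finset.eq_of_subset_of_card_le hsub ?_
          have h3' := hcon x hxS
          rw [Finset.card_erase_of_mem (Finset.mem_erase.mpr ⟨hxy.symm, hyS⟩),
            Finset.card_erase_of_mem hxS, hS5']
          omega
        have hzmem : z ∈ (S.erase x).erase y :=
          Finset.mem_erase.mpr ⟨hyz.symm, Finset.mem_erase.mpr ⟨hxz.symm, hzS⟩⟩
        rw [← heq, Finset.mem_inter, mem_neighborFinset] at hzmem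
        exact hzmem.1

lemma ncard_edgeSet_eq (G : SimpleGraph V) [Fintype G.edgeSet] :
    G.edgeSet.ncard = G.edgeFinset.card :=
  Set.ncard_eq_toFinset_card' _

/-- every spanning tree has `n - 1` edges -/
lemma spanningTree_ncard {n : ℕ} {G : SimpleGraph (Fin n)} {T : Set (Sym2 (Fin n))}
    (hT : IsSpanningTree G T) : T.ncard = n - 1 := by
  classical
  obtain ⟨hsub, htree⟩ := hT
  have hedge : (fromEdgeSet T).edgeSet = T := by
    rw [edgeSet_fromEdgeSet]
    ext e
    simp only [Set.mem_diff, Set.mem_setOf_eq]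
    exact ⟨fun h => h.1, fun h => ⟨h, G.not_isDiag_of_mem_edgeSet (hsub h)⟩⟩
  have hcard := htree.card_edgeFinset
  rw [Fintype.card_fin, ← ncard_edgeSet_eq, hedge] at hcard
  omega

theorem foster {n : ℕ} (G : SimpleGraph (Fin n)) [DecidableRel G.Adj] :
    ∑ e ∈ G.edgeFinset, tauEdge G e = tau G * (n - 1) := by
  classical
  have hTfin : {T : Set (Sym2 (Fin n)) | IsSpanningTree G T}.Finite := Set.toFinite _
  set TF : Finset (Set (Sym2 (Fin n))) := hTfin.toFinset with hTF
  have hTFmem : ∀ T, T ∈ TF ↔ IsSpanningTree G T := by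
    intro T
    rw [hTF, Set.Finite.mem_toFinset]
    rfl
  have htau : tau G = TF.card := by
    rw [tau, hTF, Set.ncard_eq_toFinset_card]
  have htauEdge : ∀ e, tauEdge G e = (TF.filter (fun T => e ∈ T)).card := by
    intro e
    rw [tauEdge]
    have : {T : Set (Sym2 (Fin n)) | IsSpanningTree G T ∧ e ∈ T}
        = ↑(TF.filter (fun T => e ∈ T)) := by
      ext T
      simp only [Set.mem_setOf_eq, Finset.coe_filter, hTFmem]
    rw [this, Set.ncard_coe_finset]
  calc ∑ e ∈ G.edgeFinset, tauEdge G e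
      = ∑ e ∈ G.edgeFinset, ∑ T ∈ TF, (if e ∈ T then 1 else 0) := by
        refine Finset.sum_congr rfl (fun e _ => ?_)
        rw [htauEdge e, Finset.card_filter]
    _ = ∑ T ∈ TF, ∑ e ∈ G.edgeFinset, (if e ∈ T then 1 else 0) := Finset.sum_comm
    _ = ∑ T ∈ TF, (n - 1) := by
        refine Finset.sum_congr rfl (fun T hT => ?_)
        rw [← Finset.card_filter]
        have hT' : IsSpanningTree G T := (hTFmem T).mp hT
        have hcoe : ↑(G.edgeFinset.filter (fun e => e ∈ T)) = T := by
          ext e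
          simp only [Finset.coe_filter, Set.mem_setOf_eq, mem_edgeFinset]
          exact ⟨fun h => h.2, fun h => ⟨hT'.1 h, h⟩⟩
        have := spanningTree_ncard hT'
        rw [← hcoe, Set.ncard_coe_finset] at this
        exact this
    _ = TF.card * (n - 1) := by rw [Finset.sum_const, smul_eq_mul]
    _ = tau G * (n - 1) := by rw [htau]

/-- No rational p/q with p/q at most 1/3 is the spanning tree edge dependence of a simple
connected planar graph. -/
theorem no_planar_dep_le_third (p q : ℕ) (hp : 0 < p) (hpq : p < q)
    (h : (p : ℚ) / q ≤ 1/3) :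
    ¬ ∃ (n : ℕ) (G : SimpleGraph (Fin n)),
        G.Connected ∧ IsPlanar G ∧ IsDep G ((p : ℚ) / q) := by
  rintro ⟨n, G, hconn, hplanar, hdep⟩
  classical
  obtain ⟨⟨e0, he0, hde0⟩, hub⟩ := hdep
  have hq0 : (0 : ℚ) < (q : ℚ) := by
    have : 0 < q := lt_trans hp hpq
    exact_mod_cast this
  have hp0 : (0 : ℚ) < (p : ℚ) := by exact_mod_cast hp
  have hpqpos : (0 : ℚ) < (p : ℚ) / q := div_pos hp0 hq0
  -- tau is positive
  have htau_pos : 0 < tau G := by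
    by_contra h0
    have h0' : tau G = 0 := by omega
    have : density G e0 = 0 := by
      rw [density, h0']
      simp
    rw [hde0] at this
    exact absurd this.symm (ne_of_lt hpqpos)
  -- each edge density bound gives 3 * tauEdge ≤ tau
  have hbound : ∀ e ∈ G.edgeFinset, 3 * tauEdge G e ≤ tau G := by
    intro e he
    rw [mem_edgeFinset] at he
    have hd := le_trans (hub e he) h
    rw [density] at hd
    have htQ : (0 : ℚ) < (tau G : ℚ) := by exact_mod_cast htau_pos
    rw [div_le_iff₀ htQ] at hd
    have : (3 : ℚ) * (tauEdge G e : ℚ) ≤ (tau G : ℚ) := by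
      nlinarith
    exact_mod_cast this
  -- Foster gives 3 * (n-1) ≤ #edges
  have hfoster := foster G
  have hsum_le : 3 * (tau G * (n - 1)) ≤ G.edgeFinset.card * tau G := by
    rw [← hfoster, Finset.mul_sum]
    calc ∑ e ∈ G.edgeFinset, 3 * tauEdge G e ≤ ∑ _e ∈ G.edgeFinset, tau G :=
      Finset.sum_le_sum hbound
    _ = G.edgeFinset.card * tau G := by rw [Finset.sum_const, smul_eq_mul]
  have hedges : 3 * (n - 1) ≤ G.edgeFinset.card := by
    have h1 : 3 * (n - 1) * tau G ≤ G.edgeFinset.card * tau G := by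
      calc 3 * (n - 1) * tau G = 3 * (tau G * (n - 1)) := by ring
      _ ≤ G.edgeFinset.card * tau G := hsum_le
    exact Nat.le_of_mul_le_mul_right h1 htau_pos
  -- positive number of edges
  have hne : 1 ≤ G.edgeSet.ncard := by
    have : G.edgeSet.Nonempty := ⟨e0, he0⟩
    have := (Set.ncard_pos (Set.toFinite _)).mpr this
    omega
  -- n ≥ 2
  have hn2 : 2 ≤ n := by
    induction e0 with
    | _ x y =>
      rw [mem_edgeSet] at he0
      have hxy : x ≠ y := he0.ne
      have : 2 ≤ Fintype.card (Fin n) := Fintype.one_lt_card_iff_nontrivial.mpr ⟨⟨x, y, hxy⟩⟩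
      rwa [Fintype.card_fin] at this
  have hncard : G.edgeSet.ncard = G.edgeFinset.card := ncard_edgeSet_eq G
  have hminor : IsMinor G (⊤ : SimpleGraph (Fin 5)) := by
    refine extremal n G Finset.univ (fun x y _ => Finset.mem_univ x) ?_ hne ?_
    · rw [Finset.card_univ, Fintype.card_fin]
    · rw [Finset.card_univ, Fintype.card_fin]
      omega
  exact hplanar.1 hminor

end STED
end

section
/- Let H_r be the graph on vertices u, v consisting of the edge e = uv together with r internally disjoint paths of length 2 from u to v. Then τ(H_r) = 2^{r−1}(r + 2), and the density of the edge uv is d_{H_r}(uv) = 2/(r + 2). -/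
open SimpleGraph

namespace STED

/-- \`H r\`: two vertices \`u = inl 0\`, \`v = inl 1\` joined by the edge \`uv\` and by
\`r\` internally disjoint paths of length 2 (through the midpoints \`inr i\`). -/
def pathsGraph (r : ℕ) : SimpleGraph (Fin 2 ⊕ Fin r) :=
  SimpleGraph.fromEdgeSet
    ({s(Sum.inl 0, Sum.inl 1)} ∪
      ⋃ i : Fin r, {s(Sum.inl 0, Sum.inr i), s(Sum.inl 1, Sum.inr i)})

lemma isTree_of_parent {V : Type*} (G : SimpleGraph V) (ρ : V) (par : V → V)
    (rank : V → ℕ)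
    (hadj : ∀ x y, G.Adj x y ↔ ((x ≠ ρ ∧ par x = y) ∨ (y ≠ ρ ∧ par y = x)))
    (hrank : ∀ x, x ≠ ρ → rank (par x) < rank x) :
    G.IsTree := by
  have hreach : ∀ n x, rank x ≤ n → G.Reachable x ρ := by
    intro n
    induction n with
    | zero =>
      intro x hx
      by_cases h : x = ρ
      · subst h; exact Reachable.refl _
      · exact absurd (hrank x h) (by omega)
    | succ n ih =>
      intro x hx
      by_cases h : x = ρ
      · subst h; exact Reachable.refl _
      · have h1 : G.Adj x (par x) := (hadj x (par x)).2 (Or.inl ⟨h, rfl⟩)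
        exact h1.reachable.trans (ih (par x) (by have := hrank x h; omega))
  classical
  constructor
  · rw [connected_iff]
    refine ⟨fun x y => ?_, ⟨ρ⟩⟩
    exact (hreach (rank x) x le_rfl).trans (hreach (rank y) y le_rfl).symm
  · intro v c hc
    obtain ⟨x, hx, hmax⟩ := Finset.exists_max_image c.support.toFinset rank
      ⟨v, by simp [Walk.start_mem_support]⟩
    rw [List.mem_toFinset] at hx
    have hmax' : ∀ y ∈ c.support, rank y ≤ rank x := fun y hy =>
      hmax y (List.mem_toFinset.2 hy)
    have key : ∀ (d : G.Walk x x), d.IsCycle → (∀ y, y ∈ d.support → y ∈ c.support) → False := by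
      intro d hdc hdsup
      cases d with
      | nil => exact Walk.IsCycle.not_of_nil hdc
      | @cons _ y _ h p =>
        rw [Walk.cons_isCycle_iff] at hdc
        obtain ⟨hp, he⟩ := hdc
        have hpnn : ¬ p.Nil := Walk.not_nil_of_ne h.ne'
        have hrnn : ¬ p.reverse.Nil := by
          rwa [Walk.nil_iff_length_eq, Walk.length_reverse, ← Walk.nil_iff_length_eq]
        obtain ⟨z, h', q, hq⟩ := Walk.not_nil_iff.1 hrnn
        have hez : s(x, z) ∈ p.edges := by
          have : s(x, z) ∈ p.reverse.edges := by rw [hq]; simp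
          rwa [Walk.edges_reverse, List.mem_reverse] at this
        have hzy : z ≠ y := by
          rintro rfl
          exact he hez
        have hzs : z ∈ p.support := Walk.snd_mem_support_of_mem_edges p hez
        have hys : y ∈ c.support := hdsup y (by simp [Walk.support_cons, Walk.start_mem_support])
        have hzs' : z ∈ c.support := hdsup z (by simp [Walk.support_cons]; right; exact hzs)
        have hy' : x ≠ ρ ∧ par x = y := by
          rcases (hadj x y).1 h with h1 | h1
          · exact h1
          · exact absurd (hmax' y hys) (by have := hrank y h1.1; rw [h1.2] at this; omega)
        have hz' : x ≠ ρ ∧ par x = z := by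
          rcases (hadj x z).1 h' with h1 | h1
          · exact h1
          · exact absurd (hmax' z hzs') (by have := hrank z h1.1; rw [h1.2] at this; omega)
        exact hzy (hz'.2 ▸ hy'.2 ▸ rfl)
    exact key (c.rotate x hx) (hc.rotate hx) (by
      intro y hy
      rw [Walk.support_eq_cons] at hy
      rcases List.mem_cons.1 hy with rfl | hy
      · exact hx
      · exact List.mem_of_mem_tail ((Walk.support_rotate c x hx).mem_iff.1 hy))

def ed (r : ℕ) (i : Fin r) (b : Bool) : Sym2 (Fin 2 ⊕ Fin r) :=
  if b then s(Sum.inl 0, Sum.inr i) else s(Sum.inl 1, Sum.inr i)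

def F1 (r : ℕ) (f : Fin r → Bool) : Set (Sym2 (Fin 2 ⊕ Fin r)) :=
  insert s(Sum.inl 0, Sum.inl 1) (Set.range fun i => ed r i (f i))

def F2 (r : ℕ) (i₀ : Fin r) (f : Fin r → Bool) : Set (Sym2 (Fin 2 ⊕ Fin r)) :=
  insert s(Sum.inl 1, Sum.inr i₀) (Set.range fun i => ed r i (f i))

abbrev P (r : ℕ) := (Fin r → Bool) ⊕ {p : Fin r × (Fin r → Bool) // p.2 p.1 = true}

def F (r : ℕ) : P r → Set (Sym2 (Fin 2 ⊕ Fin r))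
  | Sum.inl f => F1 r f
  | Sum.inr q => F2 r q.1.1 q.1.2

lemma mem_F1 {r : ℕ} {f : Fin r → Bool} {e : Sym2 (Fin 2 ⊕ Fin r)} :
    e ∈ F1 r f ↔ e = s(Sum.inl 0, Sum.inl 1) ∨ ∃ i, e = ed r i (f i) := by
  simp [F1, eq_comm]

lemma mem_F2 {r : ℕ} {i₀ : Fin r} {f : Fin r → Bool} {e : Sym2 (Fin 2 ⊕ Fin r)} :
    e ∈ F2 r i₀ f ↔ e = s(Sum.inl 1, Sum.inr i₀) ∨ ∃ i, e = ed r i (f i) := by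
  simp [F2, eq_comm]

lemma euw_mem_F1 {r : ℕ} {f : Fin r → Bool} {i : Fin r} :
    s((Sum.inl 0 : Fin 2 ⊕ Fin r), Sum.inr i) ∈ F1 r f ↔ f i = true := by
  rw [mem_F1]
  constructor
  · rintro (h | ⟨j, h⟩)
    · simp [Sym2.eq_iff] at h
    · by_cases hb : f j <;> simp [ed, hb, Sym2.eq_iff] at h <;> simp_all
  · intro h; exact Or.inr ⟨i, by simp [ed, h]⟩

lemma uv_mem_F1 {r : ℕ} {f : Fin r → Bool} :
    s((Sum.inl 0 : Fin 2 ⊕ Fin r), Sum.inl 1) ∈ F1 r f :=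
  Set.mem_insert _ _

lemma uv_notMem_F2 {r : ℕ} {i₀ : Fin r} {f : Fin r → Bool} :
    s((Sum.inl 0 : Fin 2 ⊕ Fin r), Sum.inl 1) ∉ F2 r i₀ f := by
  rw [mem_F2]
  rintro (h | ⟨j, h⟩)
  · simp [Sym2.eq_iff] at h
  · by_cases hb : f j <;> simp [ed, hb, Sym2.eq_iff] at h

lemma euw_mem_F2 {r : ℕ} {i₀ : Fin r} {f : Fin r → Bool} {i : Fin r} :
    s((Sum.inl 0 : Fin 2 ⊕ Fin r), Sum.inr i) ∈ F2 r i₀ f ↔ f i = true := by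
  rw [mem_F2]
  constructor
  · rintro (h | ⟨j, h⟩)
    · simp [Sym2.eq_iff] at h
    · by_cases hb : f j <;> simp [ed, hb, Sym2.eq_iff] at h <;> simp_all
  · intro h; exact Or.inr ⟨i, by simp [ed, h]⟩

lemma evw_mem_F2 {r : ℕ} {i₀ : Fin r} {f : Fin r → Bool} {i : Fin r} :
    s((Sum.inl 1 : Fin 2 ⊕ Fin r), Sum.inr i) ∈ F2 r i₀ f ↔ i = i₀ ∨ f i = false := by
  rw [mem_F2]
  constructor
  · rintro (h | ⟨j, h⟩)
    · simp [Sym2.eq_iff] at h; exact Or.inl h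
    · by_cases hb : f j <;> simp [ed, hb, Sym2.eq_iff] at h <;> simp_all
  · rintro (rfl | h)
    · exact Or.inl rfl
    · exact Or.inr ⟨i, by simp [ed, h]⟩

def parA (r : ℕ) (f : Fin r → Bool) : Fin 2 ⊕ Fin r → Fin 2 ⊕ Fin r :=
  Sum.elim (fun _ => Sum.inl 0) (fun i => if f i then Sum.inl 0 else Sum.inl 1)

def parB (r : ℕ) (i₀ : Fin r) (f : Fin r → Bool) : Fin 2 ⊕ Fin r → Fin 2 ⊕ Fin r :=
  Sum.elim (fun a => if a = 0 then Sum.inl 0 else Sum.inr i₀)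
    (fun i => if f i then Sum.inl 0 else Sum.inl 1)

lemma adjA {r : ℕ} (f : Fin r → Bool) (x y : Fin 2 ⊕ Fin r) :
    (SimpleGraph.fromEdgeSet (F1 r f)).Adj x y ↔
      ((x ≠ Sum.inl 0 ∧ parA r f x = y) ∨ (y ≠ Sum.inl 0 ∧ parA r f y = x)) := by
  rw [fromEdgeSet_adj, mem_F1]
  constructor
  · rintro ⟨(h | ⟨i, h⟩), hne⟩
    · rw [Sym2.eq_iff] at h
      rcases h with ⟨rfl, rfl⟩ | ⟨rfl, rfl⟩
      · exact Or.inr ⟨by simp, rfl⟩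
      · exact Or.inl ⟨by simp, rfl⟩
    · rcases hi : f i <;> rw [ed, hi] at h <;> simp only [if_true, if_false, Bool.false_eq_true] at h <;>
        rw [Sym2.eq_iff] at h <;>
        rcases h with ⟨rfl, rfl⟩ | ⟨rfl, rfl⟩
      · exact Or.inr ⟨by simp, by simp [parA, hi]⟩
      · exact Or.inl ⟨by simp, by simp [parA, hi]⟩
      · exact Or.inr ⟨by simp, by simp [parA, hi]⟩
      · exact Or.inl ⟨by simp, by simp [parA, hi]⟩
  · have key : ∀ z w : Fin 2 ⊕ Fin r, z ≠ Sum.inl 0 → parA r f z = w →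
        (s(z, w) = s(Sum.inl 0, Sum.inl 1) ∨ ∃ i, s(z, w) = ed r i (f i)) ∧ z ≠ w := by
      rintro z w hz rfl
      rcases z with a | i
      · fin_cases a
        · simp at hz
        · exact ⟨Or.inl (Sym2.eq_swap), by simp [parA]⟩
      · rcases hi : f i
        · exact ⟨Or.inr ⟨i, by simp [ed, hi, parA, Sym2.eq_swap]⟩, by simp [parA, hi]⟩
        · exact ⟨Or.inr ⟨i, by simp [ed, hi, parA, Sym2.eq_swap]⟩, by simp [parA, hi]⟩
    rintro (⟨hx, rfl⟩ | ⟨hy, rfl⟩)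
    · exact key x _ hx rfl
    · obtain ⟨h1, h2⟩ := key y _ hy rfl
      exact ⟨by rwa [Sym2.eq_swap] at h1, h2.symm⟩

lemma adjB {r : ℕ} (i₀ : Fin r) (f : Fin r → Bool) (x y : Fin 2 ⊕ Fin r) :
    (SimpleGraph.fromEdgeSet (F2 r i₀ f)).Adj x y ↔
      ((x ≠ Sum.inl 0 ∧ parB r i₀ f x = y) ∨ (y ≠ Sum.inl 0 ∧ parB r i₀ f y = x)) := by
  rw [fromEdgeSet_adj, mem_F2]
  constructor
  · rintro ⟨(h | ⟨i, h⟩), hne⟩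
    · rw [Sym2.eq_iff] at h
      rcases h with ⟨rfl, rfl⟩ | ⟨rfl, rfl⟩
      · exact Or.inl ⟨by simp, by simp [parB]⟩
      · exact Or.inr ⟨by simp, by simp [parB]⟩
    · rcases hi : f i <;> rw [ed, hi] at h <;> simp only [if_true, if_false, Bool.false_eq_true] at h <;>
        rw [Sym2.eq_iff] at h <;>
        rcases h with ⟨rfl, rfl⟩ | ⟨rfl, rfl⟩
      · exact Or.inr ⟨by simp, by simp [parB, hi]⟩
      · exact Or.inl ⟨by simp, by simp [parB, hi]⟩
      · exact Or.inr ⟨by simp, by simp [parB, hi]⟩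
      · exact Or.inl ⟨by simp, by simp [parB, hi]⟩
  · have key : ∀ z w : Fin 2 ⊕ Fin r, z ≠ Sum.inl 0 → parB r i₀ f z = w →
        (s(z, w) = s(Sum.inl 1, Sum.inr i₀) ∨ ∃ i, s(z, w) = ed r i (f i)) ∧ z ≠ w := by
      rintro z w hz rfl
      rcases z with a | i
      · fin_cases a
        · simp at hz
        · exact ⟨Or.inl (by simp [parB]), by simp [parB]⟩
      · rcases hi : f i
        · exact ⟨Or.inr ⟨i, by simp [ed, hi, parB, Sym2.eq_swap]⟩, by simp [parB, hi]⟩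
        · exact ⟨Or.inr ⟨i, by simp [ed, hi, parB, Sym2.eq_swap]⟩, by simp [parB, hi]⟩
    rintro (⟨hx, rfl⟩ | ⟨hy, rfl⟩)
    · exact key x _ hx rfl
    · obtain ⟨h1, h2⟩ := key y _ hy rfl
      exact ⟨by rwa [Sym2.eq_swap] at h1, h2.symm⟩

lemma isTreeA {r : ℕ} (f : Fin r → Bool) : (SimpleGraph.fromEdgeSet (F1 r f)).IsTree := by
  refine isTree_of_parent _ (Sum.inl 0) (parA r f)
    (Sum.elim (fun a => a.val) (fun _ => 2)) (adjA f) ?_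
  rintro (a | i) hx
  · fin_cases a
    · simp at hx
    · simp [parA]
  · rcases hi : f i <;> simp [parA, hi]

lemma isTreeB {r : ℕ} (i₀ : Fin r) (f : Fin r → Bool) (hq : f i₀ = true) :
    (SimpleGraph.fromEdgeSet (F2 r i₀ f)).IsTree := by
  refine isTree_of_parent _ (Sum.inl 0) (parB r i₀ f)
    (Sum.elim (fun a => if a = 0 then 0 else 2) (fun i => if i = i₀ then 1 else 3)) (adjB i₀ f) ?_
  rintro (a | i) hx
  · fin_cases a
    · simp at hx
    · simp [parB]
  · by_cases hii : i = i₀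
    · subst hii; simp [parB, hq]
    · rcases hi : f i <;> simp [parB, hi, hii]

lemma mem_edgeSet_pathsGraph {r : ℕ} {e : Sym2 (Fin 2 ⊕ Fin r)} :
    e ∈ (pathsGraph r).edgeSet ↔
      e = s(Sum.inl 0, Sum.inl 1) ∨ ∃ i, e = s(Sum.inl 0, Sum.inr i) ∨ e = s(Sum.inl 1, Sum.inr i) := by
  rw [pathsGraph, edgeSet_fromEdgeSet]
  constructor
  · rintro ⟨h, -⟩
    simpa using h
  · rintro (rfl | ⟨i, rfl | rfl⟩) <;>
      refine ⟨by simp, by simp⟩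

lemma F1_subset {r : ℕ} (f : Fin r → Bool) : F1 r f ⊆ (pathsGraph r).edgeSet := by
  intro e he
  rw [mem_edgeSet_pathsGraph]
  rcases he with rfl | ⟨i, rfl⟩
  · exact Or.inl rfl
  · rcases hi : f i <;> exact Or.inr ⟨i, by simp [ed, hi]⟩

lemma F2_subset {r : ℕ} (i₀ : Fin r) (f : Fin r → Bool) : F2 r i₀ f ⊆ (pathsGraph r).edgeSet := by
  intro e he
  rw [mem_edgeSet_pathsGraph]
  rcases he with rfl | ⟨i, rfl⟩
  · exact Or.inr ⟨i₀, Or.inr rfl⟩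
  · rcases hi : f i <;> exact Or.inr ⟨i, by simp [ed, hi]⟩

lemma walk_inv {V : Type*} {G : SimpleGraph V} (Φ : V → Prop)
    (h : ∀ x y, G.Adj x y → (Φ x ↔ Φ y)) {x y : V} (p : G.Walk x y) : Φ x ↔ Φ y := by
  induction p with
  | nil => exact Iff.rfl
  | cons h' p ih => exact (h _ _ h').trans ih

lemma spanningTree_cases {r : ℕ} (T : Set (Sym2 (Fin 2 ⊕ Fin r)))
    (hT : IsSpanningTree (pathsGraph r) T) :
    (∃ f, (∀ i, (s(Sum.inl 0, Sum.inr i) ∈ T ↔ f i = true)) ∧ T = F1 r f) ∨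
    (∃ i₀ f, f i₀ = true ∧ T = F2 r i₀ f) := by
  classical
  obtain ⟨hsub, htree⟩ := hT
  set G' := SimpleGraph.fromEdgeSet T with hG'
  -- membership shapes
  have hshape : ∀ e ∈ T, e = s(Sum.inl 0, Sum.inl 1) ∨
      ∃ i, e = s(Sum.inl 0, Sum.inr i) ∨ e = s(Sum.inl 1, Sum.inr i) :=
    fun e he => mem_edgeSet_pathsGraph.1 (hsub he)
  -- (1) each midpoint is incident to an edge of T
  have hinc : ∀ i : Fin r, s(Sum.inl 0, Sum.inr i) ∈ T ∨ s(Sum.inl 1, Sum.inr i) ∈ T := by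
    intro i
    obtain ⟨p⟩ := htree.isConnected.preconnected (Sum.inr i) (Sum.inl 0)
    have hnn : ¬ p.Nil := Walk.not_nil_of_ne (by simp)
    obtain ⟨z, hadj, q, -⟩ := Walk.not_nil_iff.1 hnn
    have hmem : s(Sum.inr i, z) ∈ T := ((fromEdgeSet_adj T).1 hadj).1
    rcases hshape _ hmem with h | ⟨j, h | h⟩ <;> rw [Sym2.eq_iff] at h
    · simp at h
    · rcases h with ⟨h1, h2⟩ | ⟨h1, h2⟩
      · exact absurd h1 (by simp)
      · obtain rfl : i = j := by simpa using h1
        exact Or.inl (by rwa [h2, Sym2.eq_swap] at hmem)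
    · rcases h with ⟨h1, h2⟩ | ⟨h1, h2⟩
      · exact absurd h1 (by simp)
      · obtain rfl : i = j := by simpa using h1
        exact Or.inr (by rwa [h2, Sym2.eq_swap] at hmem)
  -- (2) no triangle
  have htri : ∀ i : Fin r, s(Sum.inl 0, Sum.inl 1) ∈ T →
      ¬(s(Sum.inl 0, Sum.inr i) ∈ T ∧ s(Sum.inl 1, Sum.inr i) ∈ T) := by
    rintro i huv ⟨h1, h2⟩
    have a1 : G'.Adj (Sum.inl 0) (Sum.inr i) := (fromEdgeSet_adj T).2 ⟨h1, by simp⟩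
    have a2 : G'.Adj (Sum.inr i) (Sum.inl 1) := (fromEdgeSet_adj T).2 ⟨by rwa [Sym2.eq_swap], by simp⟩
    have a3 : G'.Adj (Sum.inl 1) (Sum.inl 0) := (fromEdgeSet_adj T).2 ⟨by rwa [Sym2.eq_swap], by simp⟩
    have hc : (Walk.cons a1 (Walk.cons a2 (Walk.cons a3 Walk.nil))).IsCycle := by
      simp [Walk.isCycle_def, Walk.isTrail_def, Sym2.eq_iff]
    exact htree.2 _ hc
  -- (3) no 4-cycle
  have hquad : ∀ i j : Fin r, i ≠ j →
      ¬(s(Sum.inl 0, Sum.inr i) ∈ T ∧ s(Sum.inl 1, Sum.inr i) ∈ T ∧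
        s(Sum.inl 0, Sum.inr j) ∈ T ∧ s(Sum.inl 1, Sum.inr j) ∈ T) := by
    rintro i j hij ⟨h1, h2, h3, h4⟩
    have a1 : G'.Adj (Sum.inl 0) (Sum.inr i) := (fromEdgeSet_adj T).2 ⟨h1, by simp⟩
    have a2 : G'.Adj (Sum.inr i) (Sum.inl 1) := (fromEdgeSet_adj T).2 ⟨by rwa [Sym2.eq_swap], by simp⟩
    have a3 : G'.Adj (Sum.inl 1) (Sum.inr j) := (fromEdgeSet_adj T).2 ⟨h4, by simp⟩
    have a4 : G'.Adj (Sum.inr j) (Sum.inl 0) := (fromEdgeSet_adj T).2 ⟨by rwa [Sym2.eq_swap], by simp⟩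
    have hc : (Walk.cons a1 (Walk.cons a2 (Walk.cons a3 (Walk.cons a4 Walk.nil)))).IsCycle := by
      simp [Walk.isCycle_def, Walk.isTrail_def, Sym2.eq_iff, hij, Ne.symm hij]
    exact htree.2 _ hc
  by_cases huv : s(Sum.inl 0, Sum.inl 1) ∈ T
  · -- case A
    refine Or.inl ⟨fun i => if s(Sum.inl 0, Sum.inr i) ∈ T then true else false, ?_, ?_⟩
    · intro i; by_cases h : s(Sum.inl 0, Sum.inr i) ∈ T <;> simp [h]
    · ext e
      constructor
      · intro he
        rw [mem_F1]
        rcases hshape _ he with rfl | ⟨i, rfl | rfl⟩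
        · exact Or.inl rfl
        · exact Or.inr ⟨i, by simp [ed, he]⟩
        · have hu : s(Sum.inl 0, Sum.inr i) ∉ T := fun hu => htri i huv ⟨hu, he⟩
          exact Or.inr ⟨i, by simp [ed, hu]⟩
      · intro he
        rcases mem_F1.1 he with rfl | ⟨i, rfl⟩
        · exact huv
        · by_cases h : s(Sum.inl 0, Sum.inr i) ∈ T
          · simpa [ed, h] using h
          · have := (hinc i).resolve_left h
            simpa [ed, h] using this
  · -- case B
    have hexists : ∃ i₀, s(Sum.inl 0, Sum.inr i₀) ∈ T ∧ s(Sum.inl 1, Sum.inr i₀) ∈ T := by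
      by_contra hno
      push_neg at hno
      set Φ : Fin 2 ⊕ Fin r → Prop :=
        fun x => x = Sum.inl 0 ∨ ∃ i, x = Sum.inr i ∧ s(Sum.inl 0, Sum.inr i) ∈ T with hΦdef
      have hΦ : ∀ x y, G'.Adj x y → (Φ x ↔ Φ y) := by
        intro x y hxy
        have hmem : s(x, y) ∈ T := ((fromEdgeSet_adj T).1 hxy).1
        rcases hshape _ hmem with h | ⟨i, h | h⟩ <;> rw [Sym2.eq_iff] at h <;>
            rcases h with ⟨rfl, rfl⟩ | ⟨rfl, rfl⟩
        · exact absurd hmem huv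
        · exact absurd (Sym2.eq_swap ▸ hmem) huv
        · have : s(Sum.inl 0, Sum.inr i) ∈ T := hmem
          simp [hΦdef, this]
        · have : s(Sum.inl 0, Sum.inr i) ∈ T := Sym2.eq_swap ▸ hmem
          simp [hΦdef, this]
        · have h2 : s(Sum.inl 0, Sum.inr i) ∉ T := fun h1 => hno i h1 hmem
          simp [hΦdef, h2]
        · have h2 : s(Sum.inl 0, Sum.inr i) ∉ T := fun h1 => hno i h1 (Sym2.eq_swap ▸ hmem)
          simp [hΦdef, h2]
      obtain ⟨p⟩ := htree.1.preconnected (Sum.inl 0) (Sum.inl 1)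
      have := (walk_inv Φ hΦ p).1 (Or.inl rfl)
      simp [hΦdef] at this
    obtain ⟨i₀, hu0, hv0⟩ := hexists
    refine Or.inr ⟨i₀, fun i => if s(Sum.inl 0, Sum.inr i) ∈ T then true else false,
      by simp [hu0], ?_⟩
    ext e
    constructor
    · intro he
      rw [mem_F2]
      rcases hshape _ he with rfl | ⟨i, rfl | rfl⟩
      · exact absurd he huv
      · exact Or.inr ⟨i, by simp [ed, he]⟩
      · by_cases hii : i = i₀
        · exact Or.inl (by rw [hii])
        · have hu : s(Sum.inl 0, Sum.inr i) ∉ T := fun hu =>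
            hquad i i₀ hii ⟨hu, he, hu0, hv0⟩
          exact Or.inr ⟨i, by simp [ed, hu]⟩
    · intro he
      rcases mem_F2.1 he with rfl | ⟨i, rfl⟩
      · exact hv0
      · by_cases h : s(Sum.inl 0, Sum.inr i) ∈ T
        · simpa [ed, h] using h
        · have := (hinc i).resolve_left h
          simpa [ed, h] using this

lemma card_subtype_true {n : ℕ} (i : Fin n) :
    Fintype.card {f : Fin n → Bool // f i = true} = 2 ^ (n - 1) := by
  classical
  have e : {f : Fin n → Bool // f i = true} ≃ {f : Fin n → Bool // ¬ (f i = true)} :=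
    { toFun := fun f => ⟨Function.update f.1 i (!(f.1 i)), by simp [f.2]⟩
      invFun := fun f => ⟨Function.update f.1 i (!(f.1 i)), by
        have : f.1 i = false := by simpa using f.2
        simp [this]⟩
      left_inv := fun f => by
        ext j
        by_cases hj : j = i
        · subst hj; simp [f.2]
        · simp [Function.update_of_ne hj]
      right_inv := fun f => by
        ext j
        by_cases hj : j = i
        · subst hj; simp
        · simp [Function.update_of_ne hj] }
  have h1 := Fintype.card_congr e
  have h2 : Fintype.card {f : Fin n → Bool // ¬ (f i = true)} =
      Fintype.card (Fin n → Bool) - Fintype.card {f : Fin n → Bool // f i = true} :=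
    Fintype.card_subtype_compl _
  have h3 : Fintype.card (Fin n → Bool) = 2 ^ n := by simp
  have hn : 1 ≤ n := i.pos
  have h4 : Fintype.card {f : Fin n → Bool // f i = true} ≤ 2 ^ n := by
    rw [← h3]; exact Fintype.card_subtype_le _
  obtain ⟨k, rfl⟩ : ∃ k, n = k + 1 := ⟨n - 1, (Nat.succ_pred_eq_of_pos hn).symm⟩
  have hpow : (2:ℕ) ^ (k+1) = 2 * 2 ^ k := by ring
  rw [h2, h3] at h1
  obtain ⟨c, hc⟩ : ∃ c, Fintype.card {f : Fin (k+1) → Bool // f i = true} = c := ⟨_, rfl⟩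
  rw [hc] at h1 h4 ⊢
  simp only [Nat.add_sub_cancel]
  clear e h2 h3 hc i
  omega

lemma card_pairs {n : ℕ} :
    Fintype.card {p : Fin n × (Fin n → Bool) // p.2 p.1 = true} = n * 2 ^ (n - 1) := by
  classical
  have e := Equiv.subtypeProdEquivSigmaSubtype (fun (i : Fin n) (f : Fin n → Bool) => f i = true)
  rw [Fintype.card_congr e, Fintype.card_sigma]
  simp only [card_subtype_true]
  simp [Finset.sum_const, Finset.card_univ]

lemma F_inj {r : ℕ} : Function.Injective (F r) := by
  rintro (f | ⟨⟨i₀, f⟩, hf⟩) (g | ⟨⟨i₁, g⟩, hg⟩) h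
  · have hfg : f = g := by
      funext i
      have : f i = true ↔ g i = true := by
        rw [← euw_mem_F1, ← euw_mem_F1]
        show _ ∈ F r (Sum.inl f) ↔ _ ∈ F r (Sum.inl g)
        rw [h]
      revert this; cases hfi : f i <;> cases hgi : g i <;> simp
    rw [hfg]
  · exact absurd (show s((Sum.inl 0 : Fin 2 ⊕ Fin r), Sum.inl 1) ∈ F2 r i₁ g by
      rw [show F2 r i₁ g = F r (Sum.inl f) from h.symm]; exact uv_mem_F1) uv_notMem_F2
  · exact absurd (show s((Sum.inl 0 : Fin 2 ⊕ Fin r), Sum.inl 1) ∈ F2 r i₀ f by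
      rw [show F2 r i₀ f = F r (Sum.inl g) from h]; exact uv_mem_F1) uv_notMem_F2
  · have hfg : f = g := by
      funext i
      have : f i = true ↔ g i = true := by
        rw [← euw_mem_F2 (i₀ := i₀), ← euw_mem_F2 (i₀ := i₁)]
        show _ ∈ F r (Sum.inr ⟨(i₀, f), hf⟩) ↔ _ ∈ F r (Sum.inr ⟨(i₁, g), hg⟩)
        rw [h]
      revert this; cases hfi : f i <;> cases hgi : g i <;> simp
    subst hfg
    have hii : i₀ = i₁ := by
      have h1 : s((Sum.inl 1 : Fin 2 ⊕ Fin r), Sum.inr i₀) ∈ F2 r i₁ f := by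
        rw [show F2 r i₁ f = F r (Sum.inr ⟨(i₀, f), hf⟩) from h.symm]
        exact evw_mem_F2.2 (Or.inl rfl)
      rcases evw_mem_F2.1 h1 with h2 | h2
      · exact h2
      · exact absurd h2 (by rw [show f i₀ = true from hf]; simp)
    subst hii
    rfl

lemma spanningTrees_eq_range {r : ℕ} :
    {T : Set (Sym2 (Fin 2 ⊕ Fin r)) | IsSpanningTree (pathsGraph r) T} = Set.range (F r) := by
  ext T
  constructor
  · intro hT
    rcases spanningTree_cases T hT with ⟨f, -, rfl⟩ | ⟨i₀, f, hq, rfl⟩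
    · exact ⟨Sum.inl f, rfl⟩
    · exact ⟨Sum.inr ⟨(i₀, f), hq⟩, rfl⟩
  · rintro ⟨(f | q), rfl⟩
    · exact ⟨F1_subset f, isTreeA f⟩
    · exact ⟨F2_subset q.1.1 q.1.2, isTreeB q.1.1 q.1.2 q.2⟩

lemma tau_pathsGraph (r : ℕ) : tau (pathsGraph r) = 2 ^ r + r * 2 ^ (r - 1) := by
  rw [tau, spanningTrees_eq_range, ← Set.image_univ,
    Set.ncard_image_of_injective _ F_inj, Set.ncard_univ, Nat.card_eq_fintype_card,
    Fintype.card_sum, card_pairs]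
  simp

lemma uvTrees_eq_range {r : ℕ} :
    {T : Set (Sym2 (Fin 2 ⊕ Fin r)) | IsSpanningTree (pathsGraph r) T ∧
        s(Sum.inl 0, Sum.inl 1) ∈ T} = Set.range (F1 r) := by
  ext T
  constructor
  · rintro ⟨hT, hm⟩
    rcases spanningTree_cases T hT with ⟨f, -, rfl⟩ | ⟨i₀, f, hq, rfl⟩
    · exact ⟨f, rfl⟩
    · exact absurd hm uv_notMem_F2
  · rintro ⟨f, rfl⟩
    exact ⟨⟨F1_subset f, isTreeA f⟩, uv_mem_F1⟩

lemma tauEdge_pathsGraph (r : ℕ) :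
    tauEdge (pathsGraph r) s(Sum.inl 0, Sum.inl 1) = 2 ^ r := by
  have hinj : Function.Injective (F1 r) := fun a b hab =>
    Sum.inl.inj (F_inj (show F r (Sum.inl a) = F r (Sum.inl b) from hab))
  rw [tauEdge, uvTrees_eq_range, ← Set.image_univ,
    Set.ncard_image_of_injective _ hinj, Set.ncard_univ, Nat.card_eq_fintype_card]
  simp

/-- `τ(H r) = 2^(r-1)(r+2)` and the key edge `uv` of `H r` has density `2/(r+2)`. -/
theorem tau_and_density_pathsGraph (r : ℕ) (hr : 1 ≤ r) :
    tau (pathsGraph r) = 2 ^ (r - 1) * (r + 2) ∧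
    density (pathsGraph r) s(Sum.inl 0, Sum.inl 1) = 2 / ((r : ℚ) + 2) := by
  obtain ⟨k, rfl⟩ : ∃ k, r = k + 1 := ⟨r - 1, (Nat.succ_pred_eq_of_pos hr).symm⟩
  have htau : tau (pathsGraph (k + 1)) = 2 ^ k * (k + 3) := by
    rw [tau_pathsGraph]
    simp only [Nat.add_sub_cancel]
    ring
  constructor
  · rw [htau]
    simp only [Nat.add_sub_cancel]
    all_goals ring
  · rw [density, tauEdge_pathsGraph, htau]
    push_cast
    rw [div_eq_div_iff (by positivity) (by positivity)]
    ring

end STED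
end
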